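/- There exists a constant c > 0, independent of g, such that for every g ∈ C₀³(ℝ³; ℝ³) with |x| curl g ∈ L²(ℝ³) and |x| (∇·g) ∈ L²(ℝ³), one has ‖|x| ∇g‖_{L²} ≤ c(‖|x| curl g‖_{L²} + ‖|x| ∇·g‖_{L²}). -/

import Mathlib

open MeasureTheory Real Set
open scoped ENNReal RealInnerProductSpace

noncomputable section

abbrev E3 := EuclideanSpace ℝ (Fin 3)

/-- partial derivative of a scalar field in direction `i`. -/
noncomputable def pd (f : E3 → ℝ) (i : Fin 3) (x : E3) : ℝ :=
  fderiv ℝ f x (EuclideanSpace.single i 1)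

noncomputable def toE3 (v : Fin 3 → ℝ) : E3 := (WithLp.equiv 2 (Fin 3 → ℝ)).symm v

/-- cross product in ℝ³. -/
noncomputable def cross3 (a b : E3) : E3 :=
  toE3 ![a 1 * b 2 - a 2 * b 1, a 2 * b 0 - a 0 * b 2, a 0 * b 1 - a 1 * b 0]

/-- curl of a vector field. -/
noncomputable def curl3 (f : E3 → E3) (x : E3) : E3 :=
  toE3 ![pd (fun y => f y 2) 1 x - pd (fun y => f y 1) 2 x,
         pd (fun y => f y 0) 2 x - pd (fun y => f y 2) 0 x,
         pd (fun y => f y 1) 0 x - pd (fun y => f y 0) 1 x]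

/-- divergence of a vector field. -/
noncomputable def div3 (f : E3 → E3) (x : E3) : ℝ := ∑ i, pd (fun y => f y i) i x

/-- gradient of a scalar field. -/
noncomputable def grad3 (h : E3 → ℝ) (x : E3) : E3 := toE3 (fun i => pd h i x)

/-- scalar Laplacian. -/
noncomputable def lap3 (h : E3 → ℝ) (x : E3) : ℝ := ∑ i, pd (pd h i) i x

/-- componentwise (vector) Laplacian. -/
noncomputable def vlap3 (f : E3 → E3) (x : E3) : E3 := toE3 (fun i => lap3 (fun y => f y i) x)

/-- squared Frobenius norm of the Jacobian ∇f. -/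
noncomputable def jacFrobSq (f : E3 → E3) (x : E3) : ℝ :=
  ∑ i, ∑ j, (pd (fun y => f y i) j x)^2

lemma pd_contDiff {f : E3 → ℝ} {i : Fin 3} {m n : WithTop ℕ∞} (hf : ContDiff ℝ n f) (h : m + 1 ≤ n) :
    ContDiff ℝ m (pd f i) :=
  (hf.fderiv_right h).clm_apply contDiff_const

lemma pd_cs {f : E3 → ℝ} {i : Fin 3} (hf : HasCompactSupport f) :
    HasCompactSupport (pd f i) :=
  (hf.fderiv ℝ).comp_left (g := fun L : E3 →L[ℝ] ℝ => L (EuclideanSpace.single i 1)) rfl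

lemma cs_mul_left {a b : E3 → ℝ} (h : HasCompactSupport b) :
    HasCompactSupport (fun x => a x * b x) := h.mul_left

lemma cs_mul_right {a b : E3 → ℝ} (h : HasCompactSupport a) :
    HasCompactSupport (fun x => a x * b x) := h.mul_right

lemma integ_l {a b : E3 → ℝ} (ha : Continuous a) (hb : Continuous b) (h : HasCompactSupport b) :
    Integrable (fun x => a x * b x) volume :=
  (ha.mul hb).integrable_of_hasCompactSupport h.mul_left

lemma integ_r {a b : E3 → ℝ} (ha : Continuous a) (hb : Continuous b) (h : HasCompactSupport a) :
    Integrable (fun x => a x * b x) volume :=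
  (ha.mul hb).integrable_of_hasCompactSupport h.mul_right

lemma pd_mul {f g : E3 → ℝ} {i : Fin 3} {x : E3} (hf : DifferentiableAt ℝ f x)
    (hg : DifferentiableAt ℝ g x) :
    pd (fun y => f y * g y) i x = pd f i x * g x + f x * pd g i x := by
  unfold pd
  rw [fderiv_fun_mul hf hg]
  simp
  ring

lemma ibp0 (j : Fin 3) {u v : E3 → ℝ} (hu : ContDiff ℝ 1 u) (hv : ContDiff ℝ 1 v)
    (hvs : HasCompactSupport v) :
    ∫ x, u x * pd v j x = -∫ x, pd u j x * v x := by
  apply integral_mul_fderiv_eq_neg_fderiv_mul_of_integrable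
  · exact integ_l (pd_contDiff (m := 0) hu (by norm_num)).continuous hv.continuous hvs
  · exact integ_l hu.continuous (pd_contDiff (m := 0) hv (by norm_num)).continuous (pd_cs hvs)
  · exact integ_l hu.continuous hv.continuous hvs
  · exact fun x _ => hu.differentiable one_ne_zero x
  · exact fun x _ => hv.differentiable one_ne_zero x

noncomputable def Wt : E3 → ℝ := fun x => ∑ j, x j ^ 2

lemma ct_eq (j : Fin 3) : (fun y : E3 => y j) = (EuclideanSpace.proj j : E3 →L[ℝ] ℝ) := by
  funext y; simp

lemma ct_contDiff {n : WithTop ℕ∞} (j : Fin 3) : ContDiff ℝ n (fun y : E3 => y j) := by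
  rw [ct_eq]; exact ContinuousLinearMap.contDiff _

lemma pd_ct (i j : Fin 3) (x : E3) : pd (fun y => y j) i x = if j = i then 1 else 0 := by
  unfold pd
  rw [ct_eq, ContinuousLinearMap.fderiv]
  simp [EuclideanSpace.single_apply]

lemma Wt_contDiff {n : WithTop ℕ∞} : ContDiff ℝ n Wt := by
  unfold Wt
  exact ContDiff.sum fun j _ => (ct_contDiff j).pow 2

lemma Wt_nonneg (x : E3) : 0 ≤ Wt x := Finset.sum_nonneg fun j _ => sq_nonneg _

lemma Wt_eq_norm_sq (x : E3) : Wt x = ‖x‖ ^ 2 := by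
  have h : ‖x‖ = Real.sqrt (∑ j, x j ^ 2) := by
    rw [EuclideanSpace.norm_eq]
    congr 1
    exact Finset.sum_congr rfl fun j _ => by rw [Real.norm_eq_abs, sq_abs]
  rw [h, Real.sq_sqrt (Finset.sum_nonneg fun j _ => sq_nonneg _)]
  rfl

lemma pd_sum {f : Fin 3 → E3 → ℝ} {i : Fin 3} {x : E3}
    (h : ∀ k, DifferentiableAt ℝ (f k) x) :
    pd (fun y => ∑ k, f k y) i x = ∑ k, pd (f k) i x := by
  unfold pd
  rw [fderiv_fun_sum fun k _ => h k]
  simp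

lemma pd_Wt (i : Fin 3) (x : E3) : pd Wt i x = 2 * x i := by
  unfold Wt
  have h1 : ∀ k : Fin 3, pd (fun y : E3 => y k ^ 2) i x = if k = i then 2 * x i else 0 := by
    intro k
    have : (fun y : E3 => y k ^ 2) = fun y : E3 => y k * y k := by funext y; ring
    rw [this, pd_mul ((ct_contDiff (n := 1) k).differentiable one_ne_zero x)
      ((ct_contDiff (n := 1) k).differentiable one_ne_zero x), pd_ct]
    by_cases h : k = i
    · subst h; simp; ring
    · simp [h]
  rw [pd_sum fun k => ((ct_contDiff (n := 1) k).pow 2).differentiable one_ne_zero x]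
  simp [h1]

lemma pd_comm {f : E3 → ℝ} (hf : ContDiff ℝ 2 f) (i j : Fin 3) (x : E3) :
    pd (pd f i) j x = pd (pd f j) i x := by
  have hd : ∀ y, HasFDerivAt f (fderiv ℝ f y) y := fun y =>
    ((hf.differentiable (by norm_num)) y).hasFDerivAt
  have hf' : ContDiff ℝ 1 (fderiv ℝ f) := hf.fderiv_right (by norm_num)
  have h'' : HasFDerivAt (fderiv ℝ f) (fderiv ℝ (fderiv ℝ f) x) x :=
    ((hf'.differentiable one_ne_zero) x).hasFDerivAt
  have sym := second_derivative_symmetric hd h'' (EuclideanSpace.single i 1)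
    (EuclideanSpace.single j 1)
  have key : ∀ k l : Fin 3, pd (pd f k) l x =
      fderiv ℝ (fderiv ℝ f) x (EuclideanSpace.single l 1) (EuclideanSpace.single k 1) := by
    intro k l
    show fderiv ℝ (fun y => fderiv ℝ f y (EuclideanSpace.single k 1)) x _ = _
    rw [fderiv_clm_apply ((hf'.differentiable one_ne_zero) x) (differentiableAt_const _)]
    simp
  rw [key i j, key j i, sym]

lemma ibpW (j : Fin 3) {u v : E3 → ℝ} (hu : ContDiff ℝ 1 u) (hus : HasCompactSupport u)
    (hv : ContDiff ℝ 1 v) (hvs : HasCompactSupport v) :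
    ∫ x, Wt x * (u x * pd v j x) =
      -((∫ x, 2 * x j * (u x * v x)) + ∫ x, Wt x * (pd u j x * v x)) := by
  have hWu : ContDiff ℝ 1 (fun y => Wt y * u y) := Wt_contDiff.mul hu
  have h0 : ∫ x, (fun y => Wt y * u y) x * pd v j x
      = -∫ x, pd (fun y => Wt y * u y) j x * v x := ibp0 j hWu hv hvs
  have e1 : (fun x => Wt x * (u x * pd v j x)) = fun x => (fun y => Wt y * u y) x * pd v j x := by
    funext x; ring
  have e3 : (fun x => pd (fun y => Wt y * u y) j x * v x)
      = fun x => 2 * x j * (u x * v x) + Wt x * (pd u j x * v x) := by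
    funext x
    rw [pd_mul (Wt_contDiff.differentiable one_ne_zero x) (hu.differentiable one_ne_zero x), pd_Wt]
    ring
  have h1 : Integrable (fun x => 2 * x j * (u x * v x)) volume :=
    integ_l (continuous_const.mul (ct_contDiff (n := 1) j).continuous)
      (hu.continuous.mul hv.continuous) (cs_mul_left hvs)
  have h2 : Integrable (fun x => Wt x * (pd u j x * v x)) volume :=
    integ_l (Wt_contDiff (n := 1)).continuous
      ((pd_contDiff (m := 0) hu (by norm_num)).continuous.mul hv.continuous) (cs_mul_left hvs)
  rw [e1, h0, e3, integral_add h1 h2]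

noncomputable def Fc (g : E3 → E3) (i : Fin 3) : E3 → ℝ := fun y => g y i

noncomputable def Pm (g : E3 → E3) (i j : Fin 3) : E3 → ℝ := pd (Fc g i) j

variable {g : E3 → E3}

lemma Pm_eq (g : E3 → E3) (i j : Fin 3) : pd (Fc g i) j = Pm g i j := rfl

lemma Fc_contDiff (hg : ContDiff ℝ 3 g) (i : Fin 3) : ContDiff ℝ 3 (Fc g i) := by
  have : Fc g i = fun y => (EuclideanSpace.proj i : E3 →L[ℝ] ℝ) (g y) := by
    funext y; simp [Fc]
  rw [this]
  exact (ContinuousLinearMap.contDiff _).comp hg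

lemma Fc_cs (hs : HasCompactSupport g) (i : Fin 3) : HasCompactSupport (Fc g i) :=
  hs.comp_left (g := fun v : E3 => v i) rfl

lemma Pm_contDiff (hg : ContDiff ℝ 3 g) (i j : Fin 3) : ContDiff ℝ 2 (Pm g i j) :=
  pd_contDiff (Fc_contDiff hg i) (by norm_num)

lemma Pm_cs (hs : HasCompactSupport g) (i j : Fin 3) : HasCompactSupport (Pm g i j) :=
  pd_cs (Fc_cs hs i)

lemma Qm_contDiff (hg : ContDiff ℝ 3 g) (i j k : Fin 3) : ContDiff ℝ 1 (pd (Pm g i j) k) :=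
  pd_contDiff (Pm_contDiff hg i j) (by norm_num)

lemma Qm_cs (hs : HasCompactSupport g) (i j k : Fin 3) : HasCompactSupport (pd (Pm g i j) k) :=
  pd_cs (Pm_cs hs i j)

/-- per-pair identity: K_ij - L_ij. -/
lemma stepKL (hg : ContDiff ℝ 3 g) (hs : HasCompactSupport g) (i j : Fin 3) :
    (∫ x, Wt x * (Pm g i j x * Pm g j i x)) - ∫ x, Wt x * (Pm g i i x * Pm g j j x)
      = -(∫ x, 2 * x j * (Pm g j i x * Fc g i x))
        + ∫ x, 2 * x i * (Pm g j j x * Fc g i x) := by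
  have hFi : ContDiff ℝ 1 (Fc g i) := (Fc_contDiff hg i).of_le (by norm_num)
  have hK : ∫ x, Wt x * (Pm g j i x * pd (Fc g i) j x)
      = -((∫ x, 2 * x j * (Pm g j i x * Fc g i x))
          + ∫ x, Wt x * (pd (Pm g j i) j x * Fc g i x)) :=
    ibpW j ((Pm_contDiff hg j i).of_le (by norm_num)) (Pm_cs hs j i) hFi (Fc_cs hs i)
  have hL : ∫ x, Wt x * (Pm g j j x * pd (Fc g i) i x)
      = -((∫ x, 2 * x i * (Pm g j j x * Fc g i x))
          + ∫ x, Wt x * (pd (Pm g j j) i x * Fc g i x)) :=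
    ibpW i ((Pm_contDiff hg j j).of_le (by norm_num)) (Pm_cs hs j j) hFi (Fc_cs hs i)
  have eK : (fun x => Wt x * (Pm g i j x * Pm g j i x))
      = fun x => Wt x * (Pm g j i x * pd (Fc g i) j x) := by
    funext x; show Wt x * (Pm g i j x * Pm g j i x) = Wt x * (Pm g j i x * Pm g i j x); ring
  have eL : (fun x => Wt x * (Pm g i i x * Pm g j j x))
      = fun x => Wt x * (Pm g j j x * pd (Fc g i) i x) := by
    funext x; show Wt x * (Pm g i i x * Pm g j j x) = Wt x * (Pm g j j x * Pm g i i x); ring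
  have eQ : (fun x => Wt x * (pd (Pm g j i) j x * Fc g i x))
      = fun x => Wt x * (pd (Pm g j j) i x * Fc g i x) := by
    funext x
    have : pd (Pm g j i) j x = pd (Pm g j j) i x :=
      pd_comm ((Fc_contDiff hg j).of_le (by norm_num)) i j x
    rw [this]
  rw [eK, eL, hK, hL, eQ]
  ring

/-- per-pair identity M. -/
lemma stepM (hg : ContDiff ℝ 3 g) (hs : HasCompactSupport g) (i j : Fin 3) :
    ∫ x, x j * (Fc g i x * Pm g j i x)
      = -(∫ x, x j * (Pm g i i x * Fc g j x))
        - (if j = i then ∫ x, Fc g i x * Fc g j x else 0) := by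
  have hFi : ContDiff ℝ 1 (Fc g i) := (Fc_contDiff hg i).of_le (by norm_num)
  have hFj : ContDiff ℝ 1 (Fc g j) := (Fc_contDiff hg j).of_le (by norm_num)
  have hu : ContDiff ℝ 1 (fun x : E3 => Fc g i x * x j) := hFi.mul (ct_contDiff j)
  have h0 := ibp0 i hu hFj (Fc_cs hs j)
  have e1 : (fun x => x j * (Fc g i x * Pm g j i x))
      = fun x => (fun y : E3 => Fc g i y * y j) x * pd (Fc g j) i x := by
    funext x
    show x j * (Fc g i x * Pm g j i x) = Fc g i x * x j * Pm g j i x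
    ring
  have hA : Integrable (fun x => x j * (Pm g i i x * Fc g j x)) volume :=
    integ_l (ct_contDiff (n := 1) j).continuous
      ((Pm_contDiff hg i i).continuous.mul hFj.continuous) (cs_mul_left (Fc_cs hs j))
  by_cases h : j = i
  · subst h
    have e2 : (fun x => pd (fun y : E3 => Fc g j y * y j) j x * Fc g j x)
        = fun x => x j * (Pm g j j x * Fc g j x) + Fc g j x * Fc g j x := by
      funext x
      rw [pd_mul (hFj.differentiable one_ne_zero x) ((ct_contDiff (n := 1) j).differentiable one_ne_zero x),
        pd_ct, if_pos rfl]
      simp only [Pm_eq]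
      ring
    have hB : Integrable (fun x => Fc g j x * Fc g j x) volume :=
      integ_l hFj.continuous hFj.continuous (Fc_cs hs j)
    rw [e1, h0, e2, integral_add hA hB, if_pos rfl]
    ring
  · have e2 : (fun x => pd (fun y : E3 => Fc g i y * y j) i x * Fc g j x)
        = fun x => x j * (Pm g i i x * Fc g j x) := by
      funext x
      rw [pd_mul (hFi.differentiable one_ne_zero x) ((ct_contDiff (n := 1) j).differentiable one_ne_zero x),
        pd_ct, if_neg h]
      simp only [Pm_eq]
      ring
    rw [e1, h0, e2, if_neg h]
    ring

/-- per-pair Hardy identity. -/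
lemma stepH (hg : ContDiff ℝ 3 g) (hs : HasCompactSupport g) (i j : Fin 3) :
    2 * ∫ x, x j * (Fc g i x * Pm g i j x) = -∫ x, Fc g i x * Fc g i x := by
  have hFi : ContDiff ℝ 1 (Fc g i) := (Fc_contDiff hg i).of_le (by norm_num)
  have hv : ContDiff ℝ 1 (fun y => Fc g i y * Fc g i y) := hFi.mul hFi
  have hvs : HasCompactSupport (fun y => Fc g i y * Fc g i y) := cs_mul_left (Fc_cs hs i)
  have h0 := ibp0 j (ct_contDiff (n := 1) j) hv hvs
  have e1 : (fun x => (x : E3) j * pd (fun y => Fc g i y * Fc g i y) j x)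
      = fun x => 2 * (x j * (Fc g i x * Pm g i j x)) := by
    funext x
    rw [pd_mul (hFi.differentiable one_ne_zero x) (hFi.differentiable one_ne_zero x)]
    show x j * (Pm g i j x * Fc g i x + Fc g i x * Pm g i j x) = _
    ring
  have e2 : (fun x => pd (fun y : E3 => y j) j x * (Fc g i x * Fc g i x))
      = fun x => Fc g i x * Fc g i x := by
    funext x
    rw [pd_ct, if_pos rfl, one_mul]
  rw [← integral_const_mul, ← e1]
  rw [h0, e2]

lemma norm_toE3_sq (v : Fin 3 → ℝ) : ‖toE3 v‖^2 = v 0^2 + v 1^2 + v 2^2 := by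
  have h : ‖toE3 v‖ = Real.sqrt (∑ j, v j ^ 2) := by
    rw [EuclideanSpace.norm_eq]
    congr 1
    refine Finset.sum_congr rfl fun j _ => ?_
    rw [show (toE3 v) j = v j from rfl, Real.norm_eq_abs, sq_abs]
  rw [h, Real.sq_sqrt (Finset.sum_nonneg fun j _ => sq_nonneg _), Fin.sum_univ_three]

lemma pdg_eq (i j : Fin 3) : pd (fun y => g y i) j = Pm g i j := rfl

lemma gx_eq (i : Fin 3) (x : E3) : g x i = Fc g i x := rfl

lemma norm_curl_sq (x : E3) : ‖curl3 g x‖^2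
    = (Pm g 2 1 x - Pm g 1 2 x)^2 + (Pm g 0 2 x - Pm g 2 0 x)^2
      + (Pm g 1 0 x - Pm g 0 1 x)^2 := by
  rw [show curl3 g x = toE3 ![Pm g 2 1 x - Pm g 1 2 x, Pm g 0 2 x - Pm g 2 0 x,
    Pm g 1 0 x - Pm g 0 1 x] from rfl, norm_toE3_sq]
  simp

lemma div3_eq (x : E3) : div3 g x = Pm g 0 0 x + Pm g 1 1 x + Pm g 2 2 x := by
  rw [show div3 g x = ∑ i, Pm g i i x from rfl, Fin.sum_univ_three]

lemma jac_eq (x : E3) : jacFrobSq g x = ∑ i, ∑ j, (Pm g i j x)^2 := rfl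

lemma int_congr {f h : E3 → ℝ} (e : ∀ x, f x = h x) :
    ∫ x, f x = ∫ x, h x := by
  exact congrArg (MeasureTheory.integral volume) (funext e)

lemma cs_poly (hs : HasCompactSupport g) {f : E3 → ℝ}
    (hz : ∀ x, x ∉ tsupport g → f x = 0) : HasCompactSupport f := by
  apply IsCompact.of_isClosed_subset hs isClosed_closure
  apply closure_minimal _ (isClosed_tsupport g)
  intro x hx
  by_contra hmem
  exact hx (hz x hmem)

lemma Fc_zero (i : Fin 3) {x : E3} (hx : x ∉ tsupport g) : Fc g i x = 0 := by
  have : g x = 0 := image_eq_zero_of_notMem_tsupport hx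
  simp [Fc, this]

lemma Pm_zero (i j : Fin 3) {x : E3} (hx : x ∉ tsupport g) : Pm g i j x = 0 := by
  have hev : Fc g i =ᶠ[nhds x] (fun _ => (0:ℝ)) := by
    filter_upwards [IsOpen.mem_nhds (isClosed_tsupport g).isOpen_compl hx] with y hy
    exact Fc_zero i hy
  show fderiv ℝ (Fc g i) x _ = 0
  rw [Filter.EventuallyEq.fderiv_eq hev, fderiv_fun_const]
  simp

lemma integ_poly (hs : HasCompactSupport g) {f : E3 → ℝ} (hc : Continuous f)
    (hz : ∀ x, x ∉ tsupport g → f x = 0) : Integrable f volume :=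
  hc.integrable_of_hasCompactSupport (cs_poly hs hz)

lemma sum_integral_mul {a b : Fin 3 → E3 → ℝ}
    (h : ∀ i j, Integrable (fun x => a i x * b j x) volume) :
    ∑ i, ∑ j, ∫ x, a i x * b j x = ∫ x, (∑ i, a i x) * (∑ j, b j x) := by
  have e : (fun x => (∑ i, a i x) * (∑ j, b j x)) = fun x => ∑ i, ∑ j, a i x * b j x := by
    funext x; rw [Finset.sum_mul_sum]
  rw [e, integral_finset_sum _ (fun i _ => integrable_finset_sum _ (fun j _ => h i j))]
  exact Finset.sum_congr rfl fun i _ => (integral_finset_sum _ (fun j _ => h i j)).symm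

lemma S1 (hg : ContDiff ℝ 3 g) (hs : HasCompactSupport g) :
    ∫ x, Wt x * jacFrobSq g x
      = (∫ x, Wt x * ‖curl3 g x‖^2) + (∫ x, Wt x * (div3 g x)^2)
        + 4 * (∫ x, (∑ j, x j * g x j) * div3 g x) + 2 * ∫ x, ∑ i, (g x i)^2 := by
  have hWc : Continuous Wt := (Wt_contDiff (n := 1)).continuous
  have hPc : ∀ i j, Continuous (Pm g i j) := fun i j => (Pm_contDiff hg i j).continuous
  have hFco : ∀ i, Continuous (Fc g i) := fun i => (Fc_contDiff hg i).continuous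
  have hcc : ∀ j : Fin 3, Continuous fun x : E3 => x j := fun j => (ct_contDiff (n := 1) j).continuous
  -- integrable atoms
  have iA : ∀ i j k l : Fin 3, Integrable (fun x => Wt x * (Pm g i j x * Pm g k l x)) volume :=
    fun i j k l => integ_l hWc ((hPc i j).mul (hPc k l)) (cs_mul_left (Pm_cs hs k l))
  have iM : ∀ (r i : Fin 3) (k l : Fin 3),
      Integrable (fun x => x r * (Fc g i x * Pm g k l x)) volume :=
    fun r i k l => integ_l (hcc r) ((hFco i).mul (hPc k l)) (cs_mul_left (Pm_cs hs k l))
  have iN : ∀ (r i k l : Fin 3), Integrable (fun x => (x r * Fc g i x) * Pm g k l x) volume :=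
    fun r i k l => integ_l ((hcc r).mul (hFco i)) (hPc k l) (Pm_cs hs k l)
  have iP : ∀ (i : Fin 3) (r j : Fin 3), Integrable (fun x => Pm g i i x * (x r * Fc g j x)) volume :=
    fun i r j => integ_l (hPc i i) ((hcc r).mul (hFco j)) (cs_mul_left (Fc_cs hs j))
  have iQ : ∀ i j : Fin 3, Integrable (fun x => Fc g i x * Fc g j x) volume :=
    fun i j => integ_l (hFco i) (hFco j) (Fc_cs hs j)
  -- step A: per-pair combination
  have hAB : ∀ i j : Fin 3,
      (∫ x, Wt x * (Pm g i j x * Pm g j i x)) - (∫ x, Wt x * (Pm g i i x * Pm g j j x))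
        = -2 * (∫ x, x j * (Fc g i x * Pm g j i x))
          + 2 * (∫ x, (x i * Fc g i x) * Pm g j j x) := by
    intro i j
    rw [stepKL hg hs i j]
    have c1 : ∫ x, 2 * x j * (Pm g j i x * Fc g i x)
        = 2 * ∫ x, x j * (Fc g i x * Pm g j i x) := by
      rw [← integral_const_mul]
      exact int_congr fun x => by ring
    have c2 : ∫ x, 2 * x i * (Pm g j j x * Fc g i x)
        = 2 * ∫ x, (x i * Fc g i x) * Pm g j j x := by
      rw [← integral_const_mul]
      exact int_congr fun x => by ring
    rw [c1, c2]
    ring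
  -- step B : IT - IC - ID = ∑∑ (A - B)
  have iIT : Integrable (fun x => Wt x * jacFrobSq g x) volume := by
    refine integ_poly hs (hWc.mul ?_) fun x hx => ?_
    · show Continuous fun x => ∑ i, ∑ j, (Pm g i j x)^2
      exact continuous_finset_sum _ fun i _ => continuous_finset_sum _ fun j _ => (hPc i j).pow 2
    · rw [jac_eq]
      simp [Pm_zero _ _ hx]
  have eC : (fun x => Wt x * ‖curl3 g x‖^2) = fun x => Wt x *
      ((Pm g 2 1 x - Pm g 1 2 x)^2 + (Pm g 0 2 x - Pm g 2 0 x)^2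
        + (Pm g 1 0 x - Pm g 0 1 x)^2) := funext fun x => by rw [norm_curl_sq]
  have eD : (fun x => Wt x * (div3 g x)^2)
      = fun x => Wt x * (Pm g 0 0 x + Pm g 1 1 x + Pm g 2 2 x)^2 :=
    funext fun x => by rw [div3_eq]
  have iIC : Integrable (fun x => Wt x * ‖curl3 g x‖^2) volume := by
    rw [eC]
    refine integ_poly hs (hWc.mul ?_) fun x hx => by simp [Pm_zero _ _ hx]
    exact ((((hPc 2 1).sub (hPc 1 2)).pow 2).add (((hPc 0 2).sub (hPc 2 0)).pow 2)).add
      (((hPc 1 0).sub (hPc 0 1)).pow 2)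
  have iID : Integrable (fun x => Wt x * (div3 g x)^2) volume := by
    rw [eD]
    refine integ_poly hs (hWc.mul ?_) fun x hx => by simp [Pm_zero _ _ hx]
    exact (((hPc 0 0).add (hPc 1 1)).add (hPc 2 2)).pow 2
  have iAB : ∀ i j : Fin 3, Integrable
      (fun x => Wt x * (Pm g i j x * Pm g j i x - Pm g i i x * Pm g j j x)) volume := by
    intro i j
    have e : (fun x => Wt x * (Pm g i j x * Pm g j i x - Pm g i i x * Pm g j j x))
        = fun x => Wt x * (Pm g i j x * Pm g j i x) - Wt x * (Pm g i i x * Pm g j j x) :=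
      funext fun x => by ring
    rw [e]
    exact (iA i j j i).sub (iA i i j j)
  have hL : ∫ x, (Wt x * jacFrobSq g x - Wt x * ‖curl3 g x‖^2 - Wt x * (div3 g x)^2)
      = (∫ x, Wt x * jacFrobSq g x) - (∫ x, Wt x * ‖curl3 g x‖^2)
        - (∫ x, Wt x * (div3 g x)^2) := by
    exact (integral_sub (iIT.sub iIC) iID).trans
      (congrArg (fun t => t - ∫ x, Wt x * (div3 g x)^2) (integral_sub iIT iIC))
  have hsplit : (∫ x, Wt x * jacFrobSq g x) - (∫ x, Wt x * ‖curl3 g x‖^2)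
      - (∫ x, Wt x * (div3 g x)^2)
      = ∑ i : Fin 3, ∑ j : Fin 3,
        ((∫ x, Wt x * (Pm g i j x * Pm g j i x)) - ∫ x, Wt x * (Pm g i i x * Pm g j j x)) := by
    rw [← hL]
    have e : (fun x => Wt x * jacFrobSq g x - Wt x * ‖curl3 g x‖^2 - Wt x * (div3 g x)^2)
        = fun x => ∑ i : Fin 3, ∑ j : Fin 3,
            Wt x * (Pm g i j x * Pm g j i x - Pm g i i x * Pm g j j x) := by
      funext x
      rw [jac_eq, norm_curl_sq, div3_eq]
      simp only [Fin.sum_univ_three]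
      ring
    show ∫ x, (fun y => Wt y * jacFrobSq g y - Wt y * ‖curl3 g y‖^2 - Wt y * (div3 g y)^2) x = _
    rw [e, integral_finset_sum _ (fun i _ => integrable_finset_sum _ (fun j _ => iAB i j))]
    refine Finset.sum_congr rfl fun i _ => ?_
    rw [integral_finset_sum _ (fun j _ => iAB i j)]
    refine Finset.sum_congr rfl fun j _ => ?_
    rw [← integral_sub (iA i j j i) (iA i i j j)]
    exact int_congr fun x => by ring
  -- step C : the M sum
  have hM : ∀ i j : Fin 3, ∫ x, x j * (Fc g i x * Pm g j i x)
      = -(∫ x, Pm g i i x * (x j * Fc g j x))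
        - (if j = i then ∫ x, Fc g i x * Fc g j x else 0) := by
    intro i j
    rw [stepM hg hs i j]
    have h1 : ∫ x, x j * (Pm g i i x * Fc g j x) = ∫ x, Pm g i i x * (x j * Fc g j x) :=
      int_congr fun x => by ring
    rw [h1]
  have eG : (fun x => ∑ i, (g x i)^2) = fun x => ∑ i : Fin 3, Fc g i x * Fc g i x :=
    funext fun x => Finset.sum_congr rfl fun i _ => pow_two (Fc g i x)
  have hIG : ∫ x, ∑ i, (g x i)^2 = ∑ i : Fin 3, ∫ x, Fc g i x * Fc g i x := by
    rw [eG, integral_finset_sum _ (fun i _ => iQ i i)]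
  have sumM : ∑ i : Fin 3, ∑ j : Fin 3, ∫ x, x j * (Fc g i x * Pm g j i x)
      = -(∫ x, (∑ i, Pm g i i x) * (∑ j, x j * Fc g j x)) - ∫ x, ∑ i, (g x i)^2 := by
    have step : (∑ i : Fin 3, ∑ j : Fin 3, ∫ x, x j * (Fc g i x * Pm g j i x))
        = -(∑ i : Fin 3, ∑ j : Fin 3, ∫ x, Pm g i i x * (x j * Fc g j x))
          - ∑ i : Fin 3, ∫ x, Fc g i x * Fc g i x := by
      rw [Finset.sum_congr rfl fun i _ => Finset.sum_congr rfl fun j _ => hM i j]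
      simp [Finset.sum_sub_distrib, Finset.sum_ite_eq, ← Finset.sum_neg_distrib]
    rw [step, sum_integral_mul (fun i j => iP i j j), hIG]
  have sumN : ∑ i : Fin 3, ∑ j : Fin 3, ∫ x, (x i * Fc g i x) * Pm g j j x
      = ∫ x, (∑ i, x i * Fc g i x) * (∑ j, Pm g j j x) :=
    sum_integral_mul (fun i j => iN i i j j)
  -- assembling
  have distr : ∑ i : Fin 3, ∑ j : Fin 3,
      (-2 * (∫ x, x j * (Fc g i x * Pm g j i x)) + 2 * (∫ x, (x i * Fc g i x) * Pm g j j x))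
      = -2 * (∑ i : Fin 3, ∑ j : Fin 3, ∫ x, x j * (Fc g i x * Pm g j i x))
        + 2 * (∑ i : Fin 3, ∑ j : Fin 3, ∫ x, (x i * Fc g i x) * Pm g j j x) := by
    simp [Finset.sum_add_distrib, Finset.mul_sum]
  have hIX : ∫ x, (∑ j, x j * g x j) * div3 g x
      = ∫ x, (∑ i, x i * Fc g i x) * (∑ j, Pm g j j x) := rfl
  have hcomm : ∫ x, (∑ i, Pm g i i x) * (∑ j, x j * Fc g j x)
      = ∫ x, (∑ i, x i * Fc g i x) * (∑ j, Pm g j j x) :=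
    int_congr fun x => by rw [mul_comm]
  have main : (∫ x, Wt x * jacFrobSq g x) - (∫ x, Wt x * ‖curl3 g x‖^2)
      - (∫ x, Wt x * (div3 g x)^2)
      = 4 * (∫ x, (∑ i, x i * Fc g i x) * (∑ j, Pm g j j x)) + 2 * ∫ x, ∑ i, (g x i)^2 := by
    rw [hsplit, Finset.sum_congr rfl fun i _ => Finset.sum_congr rfl fun j _ => hAB i j,
      distr, sumM, sumN, hcomm]
    ring
  rw [hIX]
  linarith [main]

lemma Wt_expand (x : E3) : Wt x = x 0^2 + x 1^2 + x 2^2 := by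
  rw [show Wt x = ∑ j, x j^2 from rfl, Fin.sum_univ_three]

lemma S2 (hg : ContDiff ℝ 3 g) (hs : HasCompactSupport g) (i : Fin 3) :
    ∫ x, Fc g i x * Fc g i x
      ≤ (4/9) * ∫ x, Wt x * ((Pm g i 0 x)^2 + (Pm g i 1 x)^2 + (Pm g i 2 x)^2) := by
  have hWc : Continuous Wt := (Wt_contDiff (n := 1)).continuous
  have hPc : ∀ i j, Continuous (Pm g i j) := fun i j => (Pm_contDiff hg i j).continuous
  have hFco : ∀ i, Continuous (Fc g i) := fun i => (Fc_contDiff hg i).continuous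
  have hcc : ∀ j : Fin 3, Continuous fun x : E3 => x j :=
    fun j => (ct_contDiff (n := 1) j).continuous
  have iM : ∀ j : Fin 3, Integrable (fun x => x j * (Fc g i x * Pm g i j x)) volume :=
    fun j => integ_l (hcc j) ((hFco i).mul (hPc i j)) (cs_mul_left (Pm_cs hs i j))
  have iMm : ∀ j : Fin 3, Integrable (fun x => -2 * (x j * (Fc g i x * Pm g i j x))) volume :=
    fun j => (iM j).const_mul _
  have iQ : Integrable (fun x => Fc g i x * Fc g i x) volume :=
    integ_l (hFco i) (hFco i) (Fc_cs hs i)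
  have iR : Integrable
      (fun x => Wt x * ((Pm g i 0 x)^2 + (Pm g i 1 x)^2 + (Pm g i 2 x)^2)) volume := by
    refine integ_poly hs (hWc.mul ((((hPc i 0).pow 2).add ((hPc i 1).pow 2)).add
      ((hPc i 2).pow 2))) fun x hx => by simp [Pm_zero _ _ hx]
  have iBound : Integrable (fun x => (3/2) * (Fc g i x * Fc g i x)
      + (2/3) * (Wt x * ((Pm g i 0 x)^2 + (Pm g i 1 x)^2 + (Pm g i 2 x)^2))) volume :=
    (iQ.const_mul _).add (iR.const_mul _)
  have e : ∀ j : Fin 3, ∫ x, -2 * (x j * (Fc g i x * Pm g i j x)) = ∫ x, Fc g i x * Fc g i x := by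
    intro j
    rw [integral_const_mul]
    have := stepH hg hs i j
    linarith
  have hA : ∫ x, (-2 * (x 0 * (Fc g i x * Pm g i 0 x)) + -2 * (x 1 * (Fc g i x * Pm g i 1 x))
      + -2 * (x 2 * (Fc g i x * Pm g i 2 x))) = 3 * ∫ x, Fc g i x * Fc g i x := by
    have h3 : ∫ x, (-2 * (x 0 * (Fc g i x * Pm g i 0 x)) + -2 * (x 1 * (Fc g i x * Pm g i 1 x))
        + -2 * (x 2 * (Fc g i x * Pm g i 2 x)))
        = (∫ x, (-2 * (x 0 * (Fc g i x * Pm g i 0 x)) + -2 * (x 1 * (Fc g i x * Pm g i 1 x))))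
          + ∫ x, -2 * (x 2 * (Fc g i x * Pm g i 2 x)) :=
      integral_add ((iMm 0).add (iMm 1)) (iMm 2)
    have h12 : ∫ x, (-2 * (x 0 * (Fc g i x * Pm g i 0 x)) + -2 * (x 1 * (Fc g i x * Pm g i 1 x)))
        = (∫ x, -2 * (x 0 * (Fc g i x * Pm g i 0 x)))
          + ∫ x, -2 * (x 1 * (Fc g i x * Pm g i 1 x)) :=
      integral_add (iMm 0) (iMm 1)
    rw [h3, h12, e 0, e 1, e 2]
    ring
  have mono : ∀ x, (-2 * (x 0 * (Fc g i x * Pm g i 0 x)) + -2 * (x 1 * (Fc g i x * Pm g i 1 x))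
      + -2 * (x 2 * (Fc g i x * Pm g i 2 x)))
      ≤ (3/2) * (Fc g i x * Fc g i x)
        + (2/3) * (Wt x * ((Pm g i 0 x)^2 + (Pm g i 1 x)^2 + (Pm g i 2 x)^2)) := by
    intro x
    have hW := Wt_expand x
    have hcs : (x 0 * Pm g i 0 x + x 1 * Pm g i 1 x + x 2 * Pm g i 2 x)^2
        ≤ Wt x * ((Pm g i 0 x)^2 + (Pm g i 1 x)^2 + (Pm g i 2 x)^2) := by
      rw [hW]
      nlinarith [sq_nonneg (x 0 * Pm g i 1 x - x 1 * Pm g i 0 x),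
        sq_nonneg (x 0 * Pm g i 2 x - x 2 * Pm g i 0 x),
        sq_nonneg (x 1 * Pm g i 2 x - x 2 * Pm g i 1 x)]
    nlinarith [sq_nonneg (3 * Fc g i x
      + 2 * (x 0 * Pm g i 0 x + x 1 * Pm g i 1 x + x 2 * Pm g i 2 x)), hcs]
  have hmono2 : (∫ x, (-2 * (x 0 * (Fc g i x * Pm g i 0 x))
      + -2 * (x 1 * (Fc g i x * Pm g i 1 x)) + -2 * (x 2 * (Fc g i x * Pm g i 2 x))))
      ≤ ∫ x, ((3/2) * (Fc g i x * Fc g i x)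
        + (2/3) * (Wt x * ((Pm g i 0 x)^2 + (Pm g i 1 x)^2 + (Pm g i 2 x)^2))) :=
    integral_mono (((iMm 0).add (iMm 1)).add (iMm 2)) iBound mono
  have hB : ∫ x, ((3/2) * (Fc g i x * Fc g i x)
      + (2/3) * (Wt x * ((Pm g i 0 x)^2 + (Pm g i 1 x)^2 + (Pm g i 2 x)^2)))
      = (3/2) * (∫ x, Fc g i x * Fc g i x)
        + (2/3) * ∫ x, Wt x * ((Pm g i 0 x)^2 + (Pm g i 1 x)^2 + (Pm g i 2 x)^2) := by
    have hadd : ∫ x, ((3/2) * (Fc g i x * Fc g i x)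
        + (2/3) * (Wt x * ((Pm g i 0 x)^2 + (Pm g i 1 x)^2 + (Pm g i 2 x)^2)))
        = (∫ x, (3/2) * (Fc g i x * Fc g i x))
          + ∫ x, (2/3) * (Wt x * ((Pm g i 0 x)^2 + (Pm g i 1 x)^2 + (Pm g i 2 x)^2)) :=
      integral_add (iQ.const_mul _) (iR.const_mul _)
    rw [hadd, integral_const_mul, integral_const_mul]
  rw [hA, hB] at hmono2
  linarith

lemma S3 (hg : ContDiff ℝ 3 g) (hs : HasCompactSupport g) :
    4 * (∫ x, (∑ j, x j * g x j) * div3 g x)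
      ≤ (1/8) * (∫ x, ∑ i, (g x i)^2) + 32 * ∫ x, Wt x * (div3 g x)^2 := by
  have hWc : Continuous Wt := (Wt_contDiff (n := 1)).continuous
  have hPc : ∀ i j, Continuous (Pm g i j) := fun i j => (Pm_contDiff hg i j).continuous
  have hFco : ∀ i, Continuous (Fc g i) := fun i => (Fc_contDiff hg i).continuous
  have hcc : ∀ j : Fin 3, Continuous fun x : E3 => x j :=
    fun j => (ct_contDiff (n := 1) j).continuous
  have hdc : Continuous (div3 g) := by
    have : div3 g = fun x => Pm g 0 0 x + Pm g 1 1 x + Pm g 2 2 x := funext div3_eq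
    rw [this]
    exact ((hPc 0 0).add (hPc 1 1)).add (hPc 2 2)
  have hsc : Continuous (fun x : E3 => ∑ j, x j * g x j) := by
    have : (fun x : E3 => ∑ j, x j * g x j)
        = fun x => x 0 * Fc g 0 x + x 1 * Fc g 1 x + x 2 * Fc g 2 x := by
      funext x; rw [Fin.sum_univ_three]; rfl
    rw [this]
    exact (((hcc 0).mul (hFco 0)).add ((hcc 1).mul (hFco 1))).add ((hcc 2).mul (hFco 2))
  have hGc : Continuous (fun x => ∑ i, (g x i)^2) := by
    have : (fun x => ∑ i, (g x i)^2)
        = fun x => (Fc g 0 x)^2 + (Fc g 1 x)^2 + (Fc g 2 x)^2 := by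
      funext x; rw [Fin.sum_univ_three]; rfl
    rw [this]
    exact (((hFco 0).pow 2).add ((hFco 1).pow 2)).add ((hFco 2).pow 2)
  have iL : Integrable (fun x => 4 * ((∑ j, x j * g x j) * div3 g x)) volume := by
    refine Integrable.const_mul ?_ 4
    refine integ_poly hs (hsc.mul hdc) fun x hx => ?_
    rw [div3_eq]
    simp [Pm_zero _ _ hx]
  have iG : Integrable (fun x => ∑ i, (g x i)^2) volume := by
    refine integ_poly hs hGc fun x hx => ?_
    have : ∀ i, g x i = 0 := fun i => Fc_zero (g := g) i hx
    simp [this]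
  have iD : Integrable (fun x => Wt x * (div3 g x)^2) volume := by
    refine integ_poly hs (hWc.mul (hdc.pow 2)) fun x hx => ?_
    rw [div3_eq]
    simp [Pm_zero _ _ hx]
  have iR : Integrable (fun x => (1/8) * (∑ i, (g x i)^2) + 32 * (Wt x * (div3 g x)^2)) volume :=
    (iG.const_mul _).add (iD.const_mul _)
  have mono : ∀ x, 4 * ((∑ j, x j * g x j) * div3 g x)
      ≤ (1/8) * (∑ i, (g x i)^2) + 32 * (Wt x * (div3 g x)^2) := by
    intro x
    set s := ∑ j, x j * g x j with hsdef
    set d := div3 g x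
    set G := ∑ i, (g x i)^2 with hGdef
    have hG : 0 ≤ G := Finset.sum_nonneg fun _ _ => sq_nonneg _
    have hW : 0 ≤ Wt x := Wt_nonneg x
    have hcs : s^2 ≤ Wt x * G := by
      rw [hsdef, hGdef, Wt_expand, Fin.sum_univ_three, Fin.sum_univ_three]
      nlinarith [sq_nonneg (x 0 * g x 1 - x 1 * g x 0),
        sq_nonneg (x 0 * g x 2 - x 2 * g x 0), sq_nonneg (x 1 * g x 2 - x 2 * g x 1)]
    rcases eq_or_lt_of_le hG with hG0 | hGpos
    · have hs0 : s = 0 := by nlinarith [sq_nonneg s]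
      rw [hs0]
      have : 0 ≤ Wt x * d^2 := mul_nonneg hW (sq_nonneg d)
      nlinarith
    · have h1 : 0 ≤ 256 * d^2 * (Wt x * G - s^2) :=
        mul_nonneg (by positivity) (by linarith)
      nlinarith [sq_nonneg (G - 16 * s * d), h1, hGpos]
  have hmono2 : (∫ x, 4 * ((∑ j, x j * g x j) * div3 g x))
      ≤ ∫ x, ((1/8) * (∑ i, (g x i)^2) + 32 * (Wt x * (div3 g x)^2)) :=
    integral_mono iL iR mono
  have hR : ∫ x, ((1/8) * (∑ i, (g x i)^2) + 32 * (Wt x * (div3 g x)^2))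
      = (1/8) * (∫ x, ∑ i, (g x i)^2) + 32 * ∫ x, Wt x * (div3 g x)^2 := by
    have hadd : ∫ x, ((1/8) * (∑ i, (g x i)^2) + 32 * (Wt x * (div3 g x)^2))
        = (∫ x, (1/8) * (∑ i, (g x i)^2)) + ∫ x, 32 * (Wt x * (div3 g x)^2) :=
      integral_add (iG.const_mul _) (iD.const_mul _)
    rw [hadd, integral_const_mul, integral_const_mul]
  rw [integral_const_mul, hR] at hmono2
  exact hmono2

lemma core (hg : ContDiff ℝ 3 g) (hs : HasCompactSupport g) :
    ∫ x, Wt x * jacFrobSq g x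
      ≤ 18 * (∫ x, Wt x * ‖curl3 g x‖^2) + 594 * ∫ x, Wt x * (div3 g x)^2 := by
  have hWc : Continuous Wt := (Wt_contDiff (n := 1)).continuous
  have hPc : ∀ i j, Continuous (Pm g i j) := fun i j => (Pm_contDiff hg i j).continuous
  have hFco : ∀ i, Continuous (Fc g i) := fun i => (Fc_contDiff hg i).continuous
  have iQ : ∀ i : Fin 3, Integrable (fun x => Fc g i x * Fc g i x) volume :=
    fun i => integ_l (hFco i) (hFco i) (Fc_cs hs i)
  have iRow : ∀ i : Fin 3, Integrable
      (fun x => Wt x * ((Pm g i 0 x)^2 + (Pm g i 1 x)^2 + (Pm g i 2 x)^2)) volume := by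
    intro i
    refine integ_poly hs (hWc.mul ((((hPc i 0).pow 2).add ((hPc i 1).pow 2)).add
      ((hPc i 2).pow 2))) fun x hx => by simp [Pm_zero _ _ hx]
  have hITsplit : ∫ x, Wt x * jacFrobSq g x
      = ∑ i : Fin 3, ∫ x, Wt x * ((Pm g i 0 x)^2 + (Pm g i 1 x)^2 + (Pm g i 2 x)^2) := by
    have e : (fun x => Wt x * jacFrobSq g x)
        = fun x => ∑ i : Fin 3, Wt x * ((Pm g i 0 x)^2 + (Pm g i 1 x)^2 + (Pm g i 2 x)^2) := by
      funext x
      rw [jac_eq]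
      simp only [Fin.sum_univ_three]
      ring
    rw [e, integral_finset_sum _ (fun i _ => iRow i)]
  have eG : (fun x => ∑ i, (g x i)^2) = fun x => ∑ i : Fin 3, Fc g i x * Fc g i x :=
    funext fun x => Finset.sum_congr rfl fun i _ => pow_two (Fc g i x)
  have hIGsplit : ∫ x, ∑ i, (g x i)^2 = ∑ i : Fin 3, ∫ x, Fc g i x * Fc g i x := by
    rw [eG, integral_finset_sum _ (fun i _ => iQ i)]
  have hHardy : ∫ x, ∑ i, (g x i)^2 ≤ (4/9) * ∫ x, Wt x * jacFrobSq g x := by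
    rw [hIGsplit, hITsplit, Finset.mul_sum]
    exact Finset.sum_le_sum fun i _ => S2 hg hs i
  have h1 := S1 hg hs
  have h3 := S3 hg hs
  linarith

lemma elp_sq {f : E3 → ℝ} (hf : Continuous f) (h0 : ∀ x, 0 ≤ f x)
    (hi : Integrable (fun x => f x ^ 2) volume) :
    eLpNorm f 2 volume = ENNReal.ofReal (Real.sqrt (∫ x, f x ^ 2)) := by
  rw [eLpNorm_eq_lintegral_rpow_enorm_toReal two_ne_zero ENNReal.ofNat_ne_top]
  have h2 : (2 : ℝ≥0∞).toReal = 2 := by simp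
  rw [h2]
  have e1 : ∀ x, (‖f x‖ₑ) ^ (2:ℝ) = ENNReal.ofReal (f x ^ 2) := by
    intro x
    rw [← ofReal_norm_eq_enorm, Real.norm_eq_abs, abs_of_nonneg (h0 x),
      ENNReal.ofReal_rpow_of_nonneg (h0 x) (by norm_num)]
    norm_num [Real.rpow_natCast]
  have e2 : ∫⁻ x, (‖f x‖ₑ) ^ (2:ℝ) = ENNReal.ofReal (∫ x, f x ^ 2) := by
    rw [lintegral_congr e1]
    rw [← ofReal_integral_eq_lintegral_ofReal hi
      (Filter.Eventually.of_forall fun x => sq_nonneg _)]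
  rw [e2, ENNReal.ofReal_rpow_of_nonneg (integral_nonneg fun x => sq_nonneg _) (by norm_num),
    Real.sqrt_eq_rpow]


theorem weighted_grad_le_curl_add_div :
    ∃ c > (0:ℝ), ∀ g : E3 → E3, ContDiff ℝ 3 g → HasCompactSupport g →
    MemLp (fun x => ‖x‖ * ‖curl3 g x‖) 2 volume →
    MemLp (fun x => ‖x‖ * div3 g x) 2 volume →
    eLpNorm (fun x => ‖x‖ * Real.sqrt (jacFrobSq g x)) 2 volume
      ≤ ENNReal.ofReal c * (eLpNorm (fun x => ‖x‖ * ‖curl3 g x‖) 2 volume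
        + eLpNorm (fun x => ‖x‖ * |div3 g x|) 2 volume) := by
  refine ⟨25, by norm_num, fun g hg hs _ _ => ?_⟩
  have hWc : Continuous Wt := (Wt_contDiff (n := 1)).continuous
  have hPc : ∀ i j, Continuous (Pm g i j) := fun i j => (Pm_contDiff hg i j).continuous
  have hJc : Continuous (jacFrobSq g) := by
    have : jacFrobSq g = fun x => ∑ i : Fin 3, ∑ j : Fin 3, (Pm g i j x)^2 := funext jac_eq
    rw [this]
    exact continuous_finset_sum _ fun i _ => continuous_finset_sum _ fun j _ => (hPc i j).pow 2
  have hJnn : ∀ x, 0 ≤ jacFrobSq g x := by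
    intro x
    rw [jac_eq]
    exact Finset.sum_nonneg fun i _ => Finset.sum_nonneg fun j _ => sq_nonneg _
  have hdc : Continuous (div3 g) := by
    have : div3 g = fun x => Pm g 0 0 x + Pm g 1 1 x + Pm g 2 2 x := funext div3_eq
    rw [this]
    exact ((hPc 0 0).add (hPc 1 1)).add (hPc 2 2)
  have hcurlc : Continuous (fun x => ‖curl3 g x‖^2) := by
    have : (fun x => ‖curl3 g x‖^2) = fun x => ((Pm g 2 1 x - Pm g 1 2 x)^2
        + (Pm g 0 2 x - Pm g 2 0 x)^2 + (Pm g 1 0 x - Pm g 0 1 x)^2) := funext norm_curl_sq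
    rw [this]
    exact ((((hPc 2 1).sub (hPc 1 2)).pow 2).add (((hPc 0 2).sub (hPc 2 0)).pow 2)).add
      (((hPc 1 0).sub (hPc 0 1)).pow 2)
  -- the three squared integrands
  have i1 : Integrable (fun x => (‖x‖ * Real.sqrt (jacFrobSq g x)) ^ 2) volume := by
    have e : (fun x => (‖x‖ * Real.sqrt (jacFrobSq g x)) ^ 2)
        = fun x => Wt x * jacFrobSq g x := by
      funext x
      rw [mul_pow, Real.sq_sqrt (hJnn x), Wt_eq_norm_sq]
    rw [e]
    refine integ_poly hs (hWc.mul hJc) fun x hx => ?_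
    rw [jac_eq]
    simp [Pm_zero _ _ hx]
  have i2 : Integrable (fun x => (‖x‖ * ‖curl3 g x‖) ^ 2) volume := by
    have e : (fun x => (‖x‖ * ‖curl3 g x‖) ^ 2) = fun x => Wt x * ‖curl3 g x‖^2 := by
      funext x
      rw [mul_pow, Wt_eq_norm_sq]
    rw [e]
    refine integ_poly hs (hWc.mul hcurlc) fun x hx => ?_
    rw [norm_curl_sq]
    simp [Pm_zero _ _ hx]
  have i3 : Integrable (fun x => (‖x‖ * |div3 g x|) ^ 2) volume := by
    have e : (fun x => (‖x‖ * |div3 g x|) ^ 2) = fun x => Wt x * (div3 g x)^2 := by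
      funext x
      rw [mul_pow, sq_abs, Wt_eq_norm_sq]
    rw [e]
    refine integ_poly hs (hWc.mul (hdc.pow 2)) fun x hx => ?_
    rw [div3_eq]
    simp [Pm_zero _ _ hx]
  -- convert eLpNorms
  have el1 : eLpNorm (fun x => ‖x‖ * Real.sqrt (jacFrobSq g x)) 2 volume
      = ENNReal.ofReal (Real.sqrt (∫ x, (‖x‖ * Real.sqrt (jacFrobSq g x)) ^ 2)) :=
    elp_sq (continuous_norm.mul (hJc.sqrt))
      (fun x => mul_nonneg (norm_nonneg x) (Real.sqrt_nonneg _)) i1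
  have el2 : eLpNorm (fun x => ‖x‖ * ‖curl3 g x‖) 2 volume
      = ENNReal.ofReal (Real.sqrt (∫ x, (‖x‖ * ‖curl3 g x‖) ^ 2)) := by
    refine elp_sq (continuous_norm.mul ?_)
      (fun x => mul_nonneg (norm_nonneg x) (norm_nonneg _)) i2
    have : (fun x => ‖curl3 g x‖) = fun x => Real.sqrt (‖curl3 g x‖^2) := by
      funext x
      rw [Real.sqrt_sq (norm_nonneg _)]
    rw [this]
    exact hcurlc.sqrt
  have el3 : eLpNorm (fun x => ‖x‖ * |div3 g x|) 2 volume
      = ENNReal.ofReal (Real.sqrt (∫ x, (‖x‖ * |div3 g x|) ^ 2)) :=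
    elp_sq (continuous_norm.mul hdc.abs)
      (fun x => mul_nonneg (norm_nonneg x) (abs_nonneg _)) i3
  -- real-number inequality
  have eIT : ∫ x, (‖x‖ * Real.sqrt (jacFrobSq g x)) ^ 2 = ∫ x, Wt x * jacFrobSq g x :=
    int_congr fun x => by rw [mul_pow, Real.sq_sqrt (hJnn x), Wt_eq_norm_sq]
  have eIC : ∫ x, (‖x‖ * ‖curl3 g x‖) ^ 2 = ∫ x, Wt x * ‖curl3 g x‖^2 :=
    int_congr fun x => by rw [mul_pow, Wt_eq_norm_sq]
  have eID : ∫ x, (‖x‖ * |div3 g x|) ^ 2 = ∫ x, Wt x * (div3 g x)^2 :=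
    int_congr fun x => by rw [mul_pow, sq_abs, Wt_eq_norm_sq]
  have hICnn : 0 ≤ ∫ x, Wt x * ‖curl3 g x‖^2 :=
    integral_nonneg fun x => mul_nonneg (Wt_nonneg x) (sq_nonneg _)
  have hIDnn : 0 ≤ ∫ x, Wt x * (div3 g x)^2 :=
    integral_nonneg fun x => mul_nonneg (Wt_nonneg x) (sq_nonneg _)
  set a := Real.sqrt (∫ x, Wt x * ‖curl3 g x‖^2) with ha
  set b := Real.sqrt (∫ x, Wt x * (div3 g x)^2) with hb
  have hann : 0 ≤ a := Real.sqrt_nonneg _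
  have hbnn : 0 ≤ b := Real.sqrt_nonneg _
  have ha2 : a^2 = ∫ x, Wt x * ‖curl3 g x‖^2 := Real.sq_sqrt hICnn
  have hb2 : b^2 = ∫ x, Wt x * (div3 g x)^2 := Real.sq_sqrt hIDnn
  have key : Real.sqrt (∫ x, Wt x * jacFrobSq g x) ≤ 25 * (a + b) := by
    have h1 : ∫ x, Wt x * jacFrobSq g x ≤ (25 * (a + b))^2 := by
      have := core hg hs
      nlinarith [mul_nonneg hann hbnn]
    calc Real.sqrt (∫ x, Wt x * jacFrobSq g x) ≤ Real.sqrt ((25 * (a + b))^2) :=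
          Real.sqrt_le_sqrt h1
      _ = 25 * (a + b) := Real.sqrt_sq (by positivity)
  rw [el1, el2, el3, eIT, eIC, eID, ← ha, ← hb]
  calc ENNReal.ofReal (Real.sqrt (∫ x, Wt x * jacFrobSq g x))
      ≤ ENNReal.ofReal (25 * (a + b)) := ENNReal.ofReal_le_ofReal key
    _ = ENNReal.ofReal 25 * (ENNReal.ofReal a + ENNReal.ofReal b) := by
        rw [ENNReal.ofReal_mul (by norm_num), ENNReal.ofReal_add hann hbnn]
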